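/- For every n ∈ ℕ, no root of the form w·a with a elementary and ℓ(w) < n lies in D_n: {wa : a ∈ D_0, w ∈ W, ℓ(w) < n} ∩ D_n = ∅. -/

import Mathlib

open Real

variable {V : Type*} [AddCommGroup V] [Module ℝ V]

/-- The set of positive linear combinations of a set `A`. -/
def PLC (A : Set V) : Set V :=
  {v | ∃ (s : Finset V) (c : V → ℝ), (↑s : Set V) ⊆ A ∧ (∀ x ∈ s, 0 ≤ c x) ∧
    (∃ x ∈ s, 0 < c x) ∧ v = ∑ x ∈ s, c x • x}

/-- A Coxeter datum (Krammer): a root basis `Pi` in `V` with bilinear form `B`. -/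
structure CoxeterDatum (V : Type*) [AddCommGroup V] [Module ℝ V] where
  B : LinearMap.BilinForm ℝ V
  Pi : Set V
  norm_one : ∀ a ∈ Pi, B a a = 1
  symm : ∀ a ∈ Pi, ∀ b ∈ Pi, B a b = B b a
  offdiag : ∀ a ∈ Pi, ∀ b ∈ Pi, a ≠ b →
    (∃ m : ℕ, 2 ≤ m ∧ B a b = -Real.cos (Real.pi / m)) ∨ B a b ≤ -1
  zero_not_plc : (0 : V) ∉ PLC Pi

namespace CoxeterDatum

variable (D : CoxeterDatum V)

/-- The reflection in the vector `a`, as a linear endomorphism of `V`. -/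
noncomputable def refl (a : V) : Module.End ℝ V where
  toFun x := x - (2 * D.B x a) • a
  map_add' x y := by simp only [map_add, LinearMap.add_apply]; module
  map_smul' c x := by simp only [map_smul, LinearMap.smul_apply, smul_eq_mul,
    RingHom.id_apply]; module

/-- The set of simple reflections, as invertible endomorphisms of `V`. -/
def simples : Set (Module.End ℝ V)ˣ :=
  {u | ∃ a ∈ D.Pi, (u : Module.End ℝ V) = D.refl a}

/-- The Coxeter group `W`, realized as the group generated by the simple reflections. -/
noncomputable def Wgrp : Subgroup (Module.End ℝ V)ˣ := Subgroup.closure D.simples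

/-- The root system. -/
def roots : Set V :=
  {x | ∃ w ∈ D.Wgrp, ∃ a ∈ D.Pi, x = (w : Module.End ℝ V) a}

/-- The positive roots. -/
def posRoots : Set V := D.roots ∩ PLC D.Pi

/-- The negative roots. -/
def negRoots : Set V := {x | -x ∈ D.posRoots}

/-- The length of an element of `W` with respect to the simple reflections. -/
noncomputable def len (w : (Module.End ℝ V)ˣ) : ℕ :=
  sInf {n | ∃ l : List (Module.End ℝ V)ˣ,
    l.length = n ∧ (∀ u ∈ l, u ∈ D.simples) ∧ l.prod = w}

/-- The depth of a root. -/
noncomputable def dp (x : V) : ℕ :=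
  sInf {n | ∃ w ∈ D.Wgrp, D.len w = n ∧ (w : Module.End ℝ V) x ∈ D.negRoots}

/-- Dominance: `x` dominates `y` if every `w ∈ W` making `x` negative makes `y` negative. -/
def dom (x y : V) : Prop :=
  ∀ w ∈ D.Wgrp, (w : Module.End ℝ V) x ∈ D.negRoots → (w : Module.End ℝ V) y ∈ D.negRoots

/-- `D(x)`: the set of positive roots other than `x` dominated by `x`. -/
def DSet (x : V) : Set V := {y | y ∈ D.posRoots ∧ y ≠ x ∧ D.dom x y}

/-- `D_n`: the set of positive roots dominating exactly `n` other positive roots. -/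
def Dn (n : ℕ) : Set V :=
  {x | x ∈ D.posRoots ∧ (D.DSet x).Finite ∧ (D.DSet x).ncard = n}

/-- The set of reflections of `W`. -/
def TSet : Set (Module.End ℝ V)ˣ :=
  {t | ∃ w ∈ D.Wgrp, ∃ s ∈ D.simples, t = w * s * w⁻¹}

/-- `N(w)`: the set of positive roots sent to negative roots by `w`. -/
def NSet (w : (Module.End ℝ V)ˣ) : Set V :=
  {z | z ∈ D.posRoots ∧ (w : Module.End ℝ V) z ∈ D.negRoots}

/-- `N̄(w)`: the reflections `t` with `ℓ(wt) < ℓ(w)`. -/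
def Nbar (w : (Module.End ℝ V)ˣ) : Set (Module.End ℝ V)ˣ :=
  {t | t ∈ D.TSet ∧ D.len (w * t) < D.len w}

/-- The canonical generators of a reflection subgroup `W'`. -/
def canGens (W' : Subgroup (Module.End ℝ V)ˣ) : Set (Module.End ℝ V)ˣ :=
  {t | t ∈ D.TSet ∧ D.Nbar t ∩ (W' : Set (Module.End ℝ V)ˣ) = {t}}

/-- `S(x)`: elements of `W` of minimal length sending `x` into `Π` (inverse-wise). -/
def SSet (x : V) : Set (Module.End ℝ V)ˣ :=
  {w | w ∈ D.Wgrp ∧ D.len w = D.dp x - 1 ∧ ((w⁻¹ : (Module.End ℝ V)ˣ) : Module.End ℝ V) x ∈ D.Pi}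

end CoxeterDatum


namespace CoxeterDatum

variable (D : CoxeterDatum V)

-- ===================== PLC basics =====================

variable {D}

lemma plc_add {p q : V} {A : Set V} (hp : p ∈ PLC A) (hq : q ∈ PLC A) : p + q ∈ PLC A := by
  classical
  obtain ⟨s₁, c₁, hs₁, hc₁, ⟨x₁, hx₁, hx₁pos⟩, rfl⟩ := hp
  obtain ⟨s₂, c₂, hs₂, hc₂, ⟨x₂, hx₂, hx₂pos⟩, rfl⟩ := hq
  set c : V → ℝ := fun x => (if x ∈ s₁ then c₁ x else 0) + (if x ∈ s₂ then c₂ x else 0) with hc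
  have key1 : ∑ x ∈ s₁ ∪ s₂, (if x ∈ s₁ then c₁ x else 0) • x = ∑ x ∈ s₁, c₁ x • x := by
    rw [← Finset.sum_subset (Finset.subset_union_left (s₂ := s₂))]
    · exact Finset.sum_congr rfl (fun x hx => by rw [if_pos hx])
    · intro x _ hx; rw [if_neg hx, zero_smul]
  have key2 : ∑ x ∈ s₁ ∪ s₂, (if x ∈ s₂ then c₂ x else 0) • x = ∑ x ∈ s₂, c₂ x • x := by
    rw [← Finset.sum_subset (Finset.subset_union_right (s₁ := s₁))]
    · exact Finset.sum_congr rfl (fun x hx => by rw [if_pos hx])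
    · intro x _ hx; rw [if_neg hx, zero_smul]
  refine ⟨s₁ ∪ s₂, c, ?_, ?_, ⟨x₁, Finset.mem_union_left _ hx₁, ?_⟩, ?_⟩
  · intro x hx
    rcases Finset.mem_union.1 hx with h | h
    exacts [hs₁ h, hs₂ h]
  · intro x hx
    have h1 : (0:ℝ) ≤ if x ∈ s₁ then c₁ x else 0 := by split; exacts [hc₁ _ (by assumption), le_refl _]
    have h2 : (0:ℝ) ≤ if x ∈ s₂ then c₂ x else 0 := by split; exacts [hc₂ _ (by assumption), le_refl _]
    exact add_nonneg h1 h2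
  · have h1 : (if x₁ ∈ s₁ then c₁ x₁ else 0) = c₁ x₁ := if_pos hx₁
    have h2 : (0:ℝ) ≤ if x₁ ∈ s₂ then c₂ x₁ else 0 := by split; exacts [hc₂ _ (by assumption), le_refl _]
    simp only [hc]; rw [h1]; linarith
  · simp only [hc, add_smul, Finset.sum_add_distrib, key1, key2]

lemma plc_smul {p : V} {A : Set V} (hp : p ∈ PLC A) {t : ℝ} (ht : 0 < t) : t • p ∈ PLC A := by
  obtain ⟨s, c, hs, hc, ⟨x₀, hx₀, hx₀pos⟩, rfl⟩ := hp
  refine ⟨s, fun x => t * c x, hs, fun x hx => mul_nonneg ht.le (hc x hx),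
    ⟨x₀, hx₀, mul_pos ht hx₀pos⟩, ?_⟩
  rw [Finset.smul_sum]
  exact Finset.sum_congr rfl (fun x _ => by rw [smul_smul])

lemma plc_base {a : V} {A : Set V} (ha : a ∈ A) : a ∈ PLC A := by
  refine ⟨{a}, fun _ => 1, by simpa using ha, fun x _ => zero_le_one, ⟨a, Finset.mem_singleton_self a, one_pos⟩, by simp⟩

lemma plc_comb {p q : V} {A : Set V} (hp : p ∈ PLC A) (hq : q ∈ PLC A) {lam mu : ℝ}
    (hlam : 0 ≤ lam) (hmu : 0 ≤ mu) (hsum : 0 < lam + mu) : lam • p + mu • q ∈ PLC A := by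
  rcases eq_or_lt_of_le hlam with h1 | h1
  · rcases eq_or_lt_of_le hmu with h2 | h2
    · exfalso; rw [← h1, ← h2] at hsum; simp at hsum
    · rw [← h1, zero_smul, zero_add]; exact plc_smul hq h2
  · rcases eq_or_lt_of_le hmu with h2 | h2
    · rw [← h2, zero_smul, add_zero]; exact plc_smul hp h1
    · exact plc_add (plc_smul hp h1) (plc_smul hq h2)

variable (D)

lemma neg_not_plc {p : V} (hp : p ∈ PLC D.Pi) : -p ∉ PLC D.Pi := by
  intro hnp
  have := plc_add hp hnp
  rw [add_neg_cancel] at this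
  exact D.zero_not_plc this

lemma pos_neg_disjoint {x : V} (hx : x ∈ D.posRoots) (hnx : x ∈ D.negRoots) : False :=
  D.neg_not_plc hx.2 hnx.2

-- ===================== refl and sU basics =====================

lemma refl_apply (a x : V) : D.refl a x = x - (2 * D.B x a) • a := rfl

lemma refl_apply_self {a : V} (ha : a ∈ D.Pi) : D.refl a a = -a := by
  rw [refl_apply, D.norm_one a ha]
  module

lemma refl_mul_self {a : V} (ha : a ∈ D.Pi) : D.refl a * D.refl a = 1 := by
  apply LinearMap.ext
  intro x
  rw [Module.End.mul_apply, refl_apply, refl_apply, Module.End.one_apply]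
  rw [map_sub, map_smul]
  simp only [LinearMap.sub_apply, LinearMap.smul_apply, smul_eq_mul]
  rw [D.norm_one a ha]
  simp only [smul_eq_mul, mul_one]
  module

noncomputable def sU (a : V) (ha : a ∈ D.Pi) : (Module.End ℝ V)ˣ :=
  ⟨D.refl a, D.refl a, D.refl_mul_self ha, D.refl_mul_self ha⟩

lemma sU_val {a : V} (ha : a ∈ D.Pi) : (D.sU a ha : Module.End ℝ V) = D.refl a := rfl

lemma sU_mem_simples {a : V} (ha : a ∈ D.Pi) : D.sU a ha ∈ D.simples := ⟨a, ha, rfl⟩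

lemma sU_mul_self {a : V} (ha : a ∈ D.Pi) : D.sU a ha * D.sU a ha = 1 :=
  Units.ext (D.refl_mul_self ha)

lemma sU_inv {a : V} (ha : a ∈ D.Pi) : (D.sU a ha)⁻¹ = D.sU a ha :=
  inv_eq_of_mul_eq_one_right (D.sU_mul_self ha)

lemma simple_eq_sU {s : (Module.End ℝ V)ˣ} (hs : s ∈ D.simples) :
    ∃ (a : V) (ha : a ∈ D.Pi), s = D.sU a ha := by
  obtain ⟨a, ha, hval⟩ := hs
  exact ⟨a, ha, Units.ext hval⟩

lemma simple_inv_mem {s : (Module.End ℝ V)ˣ} (hs : s ∈ D.simples) : s⁻¹ ∈ D.simples := by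
  obtain ⟨a, ha, rfl⟩ := D.simple_eq_sU hs
  rw [D.sU_inv ha]; exact D.sU_mem_simples ha

lemma simple_mem_W {s : (Module.End ℝ V)ˣ} (hs : s ∈ D.simples) : s ∈ D.Wgrp :=
  Subgroup.subset_closure hs

lemma sU_mem_W {a : V} (ha : a ∈ D.Pi) : D.sU a ha ∈ D.Wgrp :=
  D.simple_mem_W (D.sU_mem_simples ha)

-- ===================== units application =====================

lemma unit_mul_apply (u v : (Module.End ℝ V)ˣ) (x : V) :
    ((u * v : (Module.End ℝ V)ˣ) : Module.End ℝ V) x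
      = (u : Module.End ℝ V) ((v : Module.End ℝ V) x) := by
  rw [Units.val_mul, Module.End.mul_apply]

lemma unit_inv_apply (u : (Module.End ℝ V)ˣ) (x : V) :
    ((u⁻¹ : (Module.End ℝ V)ˣ) : Module.End ℝ V) ((u : Module.End ℝ V) x) = x := by
  rw [← unit_mul_apply, inv_mul_cancel, Units.val_one, Module.End.one_apply]

lemma unit_apply_inv (u : (Module.End ℝ V)ˣ) (x : V) :
    (u : Module.End ℝ V) (((u⁻¹ : (Module.End ℝ V)ˣ) : Module.End ℝ V) x) = x := by
  rw [← unit_mul_apply, mul_inv_cancel, Units.val_one, Module.End.one_apply]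

-- ===================== words and length =====================

lemma exists_word {w : (Module.End ℝ V)ˣ} (hw : w ∈ D.Wgrp) :
    ∃ l : List (Module.End ℝ V)ˣ, (∀ u ∈ l, u ∈ D.simples) ∧ l.prod = w := by
  induction hw using Subgroup.closure_induction with
  | mem s hs => exact ⟨[s], by simpa using hs, by simp⟩
  | one => exact ⟨[], by simp, by simp⟩
  | mul a b _ _ iha ihb =>
    obtain ⟨l₁, h₁, hp₁⟩ := iha
    obtain ⟨l₂, h₂, hp₂⟩ := ihb
    exact ⟨l₁ ++ l₂, by
      intro u hu
      rcases List.mem_append.1 hu with h | h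
      exacts [h₁ u h, h₂ u h], by rw [List.prod_append, hp₁, hp₂]⟩
  | inv a _ iha =>
    obtain ⟨l, h, hp⟩ := iha
    refine ⟨(l.map (·⁻¹)).reverse, ?_, by rw [← List.prod_inv_reverse, hp]⟩
    intro u hu
    rw [List.mem_reverse, List.mem_map] at hu
    obtain ⟨v, hv, rfl⟩ := hu
    exact D.simple_inv_mem (h v hv)

lemma len_le {w : (Module.End ℝ V)ˣ} {l : List (Module.End ℝ V)ˣ}
    (hl : ∀ u ∈ l, u ∈ D.simples) (hp : l.prod = w) : D.len w ≤ l.length :=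
  Nat.sInf_le ⟨l, rfl, hl, hp⟩

lemma exists_min_word {w : (Module.End ℝ V)ˣ} (hw : w ∈ D.Wgrp) :
    ∃ l : List (Module.End ℝ V)ˣ, l.length = D.len w ∧ (∀ u ∈ l, u ∈ D.simples) ∧ l.prod = w := by
  obtain ⟨l, hl, hp⟩ := D.exists_word hw
  have hne : {n | ∃ l : List (Module.End ℝ V)ˣ, l.length = n ∧ (∀ u ∈ l, u ∈ D.simples) ∧ l.prod = w}.Nonempty :=
    ⟨l.length, l, rfl, hl, hp⟩
  exact Nat.sInf_mem hne

lemma eq_one_of_len_eq_zero {w : (Module.End ℝ V)ˣ} (hw : w ∈ D.Wgrp) (h : D.len w = 0) :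
    w = 1 := by
  obtain ⟨l, hl, _, hp⟩ := D.exists_min_word hw
  rw [h, List.length_eq_zero_iff] at hl
  rw [← hp, hl, List.prod_nil]

lemma len_mul_le {w v : (Module.End ℝ V)ˣ} (hw : w ∈ D.Wgrp) (hv : v ∈ D.Wgrp) :
    D.len (w * v) ≤ D.len w + D.len v := by
  obtain ⟨l₁, hl₁, hs₁, hp₁⟩ := D.exists_min_word hw
  obtain ⟨l₂, hl₂, hs₂, hp₂⟩ := D.exists_min_word hv
  have := D.len_le (l := l₁ ++ l₂) (w := w * v) (by
    intro u hu
    rcases List.mem_append.1 hu with h | h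
    exacts [hs₁ u h, hs₂ u h]) (by rw [List.prod_append, hp₁, hp₂])
  simpa [hl₁, hl₂] using this

lemma len_inv_le {w : (Module.End ℝ V)ˣ} (hw : w ∈ D.Wgrp) : D.len w⁻¹ ≤ D.len w := by
  obtain ⟨l, hl, hs, hp⟩ := D.exists_min_word hw
  have := D.len_le (l := (l.map (·⁻¹)).reverse) (w := w⁻¹) (by
    intro u hu
    rw [List.mem_reverse, List.mem_map] at hu
    obtain ⟨v, hv, rfl⟩ := hu
    exact D.simple_inv_mem (hs v hv)) (by rw [← List.prod_inv_reverse, hp])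
  simpa [hl] using this

lemma len_mul_simple_le {w s : (Module.End ℝ V)ˣ} (hw : w ∈ D.Wgrp) (hs : s ∈ D.simples) :
    D.len (w * s) ≤ D.len w + 1 := by
  have h := D.len_mul_le hw (D.simple_mem_W hs)
  have h1 : D.len s ≤ 1 := D.len_le (l := [s]) (by simpa using hs) (by simp)
  omega

-- ===================== roots basics =====================

lemma roots_W_apply {x : V} {w : (Module.End ℝ V)ˣ} (hw : w ∈ D.Wgrp) (hx : x ∈ D.roots) :
    (w : Module.End ℝ V) x ∈ D.roots := by
  obtain ⟨g, hg, c, hc, rfl⟩ := hx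
  exact ⟨w * g, mul_mem hw hg, c, hc, (unit_mul_apply w g c).symm⟩

lemma pi_sub_pos {a : V} (ha : a ∈ D.Pi) : a ∈ D.posRoots :=
  ⟨⟨1, one_mem _, a, ha, by simp⟩, plc_base ha⟩

lemma pi_sub_roots {a : V} (ha : a ∈ D.Pi) : a ∈ D.roots := (D.pi_sub_pos ha).1

lemma pi_ne_zero {a : V} (ha : a ∈ D.Pi) : a ≠ 0 := by
  intro h
  exact D.zero_not_plc (h ▸ plc_base ha)

-- ===================== B on the span of Pi =====================

lemma B_symm_span : ∀ x ∈ Submodule.span ℝ D.Pi, ∀ y ∈ Submodule.span ℝ D.Pi,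
    D.B x y = D.B y x := by
  intro x hx
  induction hx using Submodule.span_induction with
  | mem a ha =>
    intro y hy
    induction hy using Submodule.span_induction with
    | mem b hb => exact D.symm a ha b hb
    | zero => simp
    | add y z _ _ ihy ihz => simp only [map_add, LinearMap.add_apply, ihy, ihz]
    | smul r y _ ihy => simp only [map_smul, LinearMap.smul_apply, smul_eq_mul, ihy]
  | zero => intro y hy; simp
  | add x z hx hz ihx ihz =>
    intro y hy
    simp only [map_add, LinearMap.add_apply, ihx y hy, ihz y hy]
  | smul r x hx ihx =>
    intro y hy
    simp only [map_smul, LinearMap.smul_apply, smul_eq_mul, ihx y hy]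

lemma refl_mem_span {a : V} (ha : a ∈ D.Pi) {x : V} (hx : x ∈ Submodule.span ℝ D.Pi) :
    D.refl a x ∈ Submodule.span ℝ D.Pi :=
  sub_mem hx (Submodule.smul_mem _ _ (Submodule.subset_span ha))

lemma B_refl_inv {a : V} (ha : a ∈ D.Pi) {x y : V}
    (hx : x ∈ Submodule.span ℝ D.Pi) (hy : y ∈ Submodule.span ℝ D.Pi) :
    D.B (D.refl a x) (D.refl a y) = D.B x y := by
  have hay : D.B a y = D.B y a :=
    D.B_symm_span a (Submodule.subset_span ha) y hy
  have haa : D.B a a = 1 := D.norm_one a ha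
  simp only [refl_apply, map_sub, map_smul, LinearMap.sub_apply, LinearMap.smul_apply,
    smul_eq_mul]
  rw [hay, haa]
  ring

def goodW (w : (Module.End ℝ V)ˣ) : Prop :=
  (∀ x ∈ Submodule.span ℝ D.Pi, (w : Module.End ℝ V) x ∈ Submodule.span ℝ D.Pi) ∧
  (∀ x ∈ Submodule.span ℝ D.Pi, ∀ y ∈ Submodule.span ℝ D.Pi,
    D.B ((w : Module.End ℝ V) x) ((w : Module.End ℝ V) y) = D.B x y)

lemma goodW_mul {u v : (Module.End ℝ V)ˣ} (hu : D.goodW u) (hv : D.goodW v) :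
    D.goodW (u * v) := by
  constructor
  · intro x hx
    rw [unit_mul_apply]
    exact hu.1 _ (hv.1 x hx)
  · intro x hx y hy
    rw [unit_mul_apply, unit_mul_apply, hu.2 _ (hv.1 x hx) _ (hv.1 y hy), hv.2 x hx y hy]

lemma goodW_all : ∀ w ∈ D.Wgrp, D.goodW w ∧ D.goodW w⁻¹ := by
  intro w hw
  induction hw using Subgroup.closure_induction with
  | mem s hs =>
    obtain ⟨a, ha, rfl⟩ := D.simple_eq_sU hs
    have hgood : D.goodW (D.sU a ha) := by
      constructor
      · intro x hx; exact D.refl_mem_span ha hx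
      · intro x hx y hy; exact D.B_refl_inv ha hx hy
    rw [D.sU_inv ha]
    exact ⟨hgood, hgood⟩
  | one =>
    constructor <;>
    · constructor
      · intro x hx; simpa using hx
      · intro x hx y hy; simp
  | mul a b _ _ iha ihb =>
    refine ⟨D.goodW_mul iha.1 ihb.1, ?_⟩
    rw [mul_inv_rev]
    exact D.goodW_mul ihb.2 iha.2
  | inv a _ iha =>
    refine ⟨iha.2, ?_⟩
    rw [inv_inv]
    exact iha.1

lemma roots_sub_span {x : V} (hx : x ∈ D.roots) : x ∈ Submodule.span ℝ D.Pi := by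
  obtain ⟨w, hw, c, hc, rfl⟩ := hx
  exact (D.goodW_all w hw).1.1 c (Submodule.subset_span hc)

lemma root_norm {x : V} (hx : x ∈ D.roots) : D.B x x = 1 := by
  obtain ⟨w, hw, c, hc, rfl⟩ := hx
  rw [(D.goodW_all w hw).1.2 c (Submodule.subset_span hc) c (Submodule.subset_span hc)]
  exact D.norm_one c hc

-- ===================== the key rigidity lemma =====================

lemma eq_of_pos_refl_neg {a : V} (ha : a ∈ D.Pi) {p : V} (hp : p ∈ D.posRoots)
    (hneg : D.refl a p ∈ D.negRoots) : p = a := by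
  classical
  obtain ⟨hproot, hpplc⟩ := hp
  obtain ⟨s₁, c, hs₁, hc, ⟨x₁, hx₁, hx₁pos⟩, hpsum⟩ := hpplc
  have hpmem : p ∈ PLC D.Pi := ⟨s₁, c, hs₁, hc, ⟨x₁, hx₁, hx₁pos⟩, hpsum⟩
  have hqmem : -(D.refl a p) ∈ PLC D.Pi := hneg.2
  obtain ⟨s₂, d, hs₂, hd, ⟨x₂, hx₂, hx₂pos⟩, hqsum⟩ := hqmem
  have hqmem' : -(D.refl a p) ∈ PLC D.Pi := ⟨s₂, d, hs₂, hd, ⟨x₂, hx₂, hx₂pos⟩, hqsum⟩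
  set t : ℝ := 2 * D.B p a with ht
  have hkey : p + -(D.refl a p) = t • a := by
    rw [refl_apply]; module
  have hta : t • a ∈ PLC D.Pi := by
    rw [← hkey]; exact plc_add hpmem hqmem'
  -- t > 0
  have htpos : 0 < t := by
    rcases lt_trichotomy t 0 with h | h | h
    · exfalso
      have h2 : (-t) • a ∈ PLC D.Pi := plc_smul (plc_base ha) (by linarith)
      have h3 := plc_add hta h2
      rw [show t • a + (-t) • a = 0 by module] at h3
      exact absurd h3 D.zero_not_plc
    · exfalso
      rw [h, zero_smul] at hta
      exact absurd hta D.zero_not_plc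
    · exact h
  -- apply B a to the identity
  have haa : D.B a a = 1 := D.norm_one a ha
  have hBax : ∀ x ∈ s₁ ∪ s₂, x ≠ a → D.B a x ≤ 0 := by
    intro x hx hxa
    have hxPi : x ∈ D.Pi := by
      rcases Finset.mem_union.1 hx with h | h
      exacts [hs₁ h, hs₂ h]
    rcases D.offdiag a ha x hxPi (fun h => hxa h.symm) with ⟨m, hm, hBval⟩ | hBle
    · rw [hBval, neg_nonpos]
      apply Real.cos_nonneg_of_mem_Icc
      have hm0 : (0:ℝ) < (m:ℝ) := by exact_mod_cast (by omega : 0 < m)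
      have hm2 : (2:ℝ) ≤ (m:ℝ) := by exact_mod_cast hm
      constructor
      · have : (0:ℝ) < Real.pi / m := div_pos Real.pi_pos hm0
        linarith [Real.pi_pos]
      · rw [div_le_div_iff₀ hm0 (by norm_num : (0:ℝ) < 2)]
        nlinarith [Real.pi_pos]
    · linarith
  have hBsum1 : D.B a p = ∑ x ∈ s₁, c x * D.B a x := by
    rw [hpsum, map_sum]
    exact Finset.sum_congr rfl fun x _ => by rw [map_smul, smul_eq_mul]
  have hBsum2 : D.B a (-(D.refl a p)) = ∑ x ∈ s₂, d x * D.B a x := by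
    rw [hqsum, map_sum]
    exact Finset.sum_congr rfl fun x _ => by rw [map_smul, smul_eq_mul]
  have hBt : D.B a p + D.B a (-(D.refl a p)) = t := by
    have := congrArg (fun z => D.B a z) hkey
    simpa [map_add, map_smul, smul_eq_mul, haa] using this
  set ca : ℝ := if a ∈ s₁ then c a else 0 with hca
  set da : ℝ := if a ∈ s₂ then d a else 0 with hda
  have hbound1 : ∑ x ∈ s₁, c x * D.B a x ≤ ca := by
    have h1 : ∀ x ∈ s₁, c x * D.B a x ≤ (if x = a then c x else 0) := by
      intro x hx
      by_cases hxa : x = a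
      · rw [if_pos hxa, hxa, haa, mul_one]
      · rw [if_neg hxa]
        exact mul_nonpos_of_nonneg_of_nonpos (hc x hx)
          (hBax x (Finset.mem_union_left _ hx) hxa)
    calc ∑ x ∈ s₁, c x * D.B a x ≤ ∑ x ∈ s₁, (if x = a then c x else 0) :=
          Finset.sum_le_sum h1
      _ = ca := by rw [hca, Finset.sum_ite_eq' s₁ a c]
  have hbound2 : ∑ x ∈ s₂, d x * D.B a x ≤ da := by
    have h1 : ∀ x ∈ s₂, d x * D.B a x ≤ (if x = a then d x else 0) := by
      intro x hx
      by_cases hxa : x = a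
      · rw [if_pos hxa, hxa, haa, mul_one]
      · rw [if_neg hxa]
        exact mul_nonpos_of_nonneg_of_nonpos (hd x hx)
          (hBax x (Finset.mem_union_right _ hx) hxa)
    calc ∑ x ∈ s₂, d x * D.B a x ≤ ∑ x ∈ s₂, (if x = a then d x else 0) :=
          Finset.sum_le_sum h1
      _ = da := by rw [hda, Finset.sum_ite_eq' s₂ a d]
  have htle : t ≤ ca + da := by
    rw [← hBt, hBsum1, hBsum2]
    linarith
  -- the combined coefficient function
  set e : V → ℝ := fun x =>
    (if x ∈ s₁ then c x else 0) + (if x ∈ s₂ then d x else 0) - (if x = a then t else 0)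
    with he
  have hs₀ : ∀ x ∈ insert a (s₁ ∪ s₂), 0 ≤ e x := by
    intro x hx
    simp only [he]
    by_cases hxa : x = a
    · rw [hxa, if_pos rfl, ← hca, ← hda]
      linarith
    · rw [if_neg hxa]
      have h1 : (0:ℝ) ≤ if x ∈ s₁ then c x else 0 := by
        split; exacts [hc _ (by assumption), le_refl _]
      have h2 : (0:ℝ) ≤ if x ∈ s₂ then d x else 0 := by
        split; exacts [hd _ (by assumption), le_refl _]
      linarith
  have hesum : ∑ x ∈ insert a (s₁ ∪ s₂), e x • x = 0 := by
    have k1 : ∑ x ∈ insert a (s₁ ∪ s₂), (if x ∈ s₁ then c x else 0) • x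
        = ∑ x ∈ s₁, c x • x := by
      rw [← Finset.sum_subset (show s₁ ⊆ insert a (s₁ ∪ s₂) from fun x hx =>
        Finset.mem_insert_of_mem (Finset.mem_union_left _ hx))]
      · exact Finset.sum_congr rfl (fun x hx => by rw [if_pos hx])
      · intro x _ hx; rw [if_neg hx, zero_smul]
    have k2 : ∑ x ∈ insert a (s₁ ∪ s₂), (if x ∈ s₂ then d x else 0) • x
        = ∑ x ∈ s₂, d x • x := by
      rw [← Finset.sum_subset (show s₂ ⊆ insert a (s₁ ∪ s₂) from fun x hx =>
        Finset.mem_insert_of_mem (Finset.mem_union_right _ hx))]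
      · exact Finset.sum_congr rfl (fun x hx => by rw [if_pos hx])
      · intro x _ hx; rw [if_neg hx, zero_smul]
    have k3 : ∑ x ∈ insert a (s₁ ∪ s₂), (if x = a then t else 0) • x = t • a := by
      rw [Finset.sum_eq_single a]
      · rw [if_pos rfl]
      · intro x _ hxa; rw [if_neg hxa, zero_smul]
      · intro h; exact absurd (Finset.mem_insert_self a _) h
    have hmain : ∑ x ∈ insert a (s₁ ∪ s₂), e x • x
        = (∑ x ∈ s₁, c x • x) + (∑ x ∈ s₂, d x • x) - t • a := by
      rw [← k1, ← k2, ← k3, ← Finset.sum_add_distrib, ← Finset.sum_sub_distrib]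
      exact Finset.sum_congr rfl (fun x _ => by simp only [he]; module)
    rw [hmain, ← hpsum, ← hqsum, hkey]
    module
  -- case analysis
  by_cases hA : ∃ x ∈ s₁ ∪ s₂, x ≠ a ∧
      0 < (if x ∈ s₁ then c x else 0) + (if x ∈ s₂ then d x else 0)
  · exfalso
    obtain ⟨x, hx, hxa, hxpos⟩ := hA
    apply D.zero_not_plc
    refine ⟨insert a (s₁ ∪ s₂), e, ?_, hs₀, ⟨x, Finset.mem_insert_of_mem hx, ?_⟩, hesum.symm⟩
    · intro y hy
      rcases Finset.mem_insert.1 hy with rfl | hy'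
      · exact ha
      · rcases Finset.mem_union.1 hy' with h | h
        exacts [hs₁ h, hs₂ h]
    · simp only [he]
      rw [if_neg hxa]
      linarith
  by_cases hB : t < ca + da
  · exfalso
    apply D.zero_not_plc
    refine ⟨insert a (s₁ ∪ s₂), e, ?_, hs₀, ⟨a, Finset.mem_insert_self a _, ?_⟩, hesum.symm⟩
    · intro y hy
      rcases Finset.mem_insert.1 hy with rfl | hy'
      · exact ha
      · rcases Finset.mem_union.1 hy' with h | h
        exacts [hs₁ h, hs₂ h]
    · simp only [he, if_true]
      rw [← hca, ← hda]
      linarith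
  -- remaining case: all non-a coefficients vanish
  push_neg at hA
  have hx₁a : x₁ = a := by
    by_contra hne
    have h1 := hA x₁ (Finset.mem_union_left _ hx₁) hne
    rw [if_pos hx₁] at h1
    have h2 : (0:ℝ) ≤ if x₁ ∈ s₂ then d x₁ else 0 := by
      split; exacts [hd _ (by assumption), le_refl _]
    linarith
  have hcz : ∀ x ∈ s₁, x ≠ a → c x = 0 := by
    intro x hx hxa
    have h1 := hA x (Finset.mem_union_left _ hx) hxa
    rw [if_pos hx] at h1
    have h2 : (0:ℝ) ≤ if x ∈ s₂ then d x else 0 := by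
      split; exacts [hd _ (by assumption), le_refl _]
    have := hc x hx
    linarith
  have hpca : p = c x₁ • x₁ := by
    rw [hpsum, Finset.sum_eq_single x₁]
    · intro x hx hxa
      rw [hcz x hx (fun h => hxa (h.trans hx₁a.symm)), zero_smul]
    · intro h; exact absurd hx₁ h
  have hnorm : D.B p p = 1 := D.root_norm hproot
  rw [hpca, hx₁a] at hnorm
  simp only [map_smul, LinearMap.smul_apply, smul_eq_mul, haa] at hnorm
  have hcapos : 0 < c a := by rw [← hx₁a]; exact hx₁pos
  have hc1 : c a = 1 := by nlinarith
  rw [hpca, hx₁a, hc1, one_smul]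

-- ===================== generic dihedral words =====================

section Dihedral

variable {G : Type*} [Group G] (p q : G)

def wletter (x : Bool) : G := cond x q p

def wprod (l : List Bool) : G := (l.map (wletter p q)).prod

noncomputable def len2 (g : G) : ℕ := sInf {n | ∃ l : List Bool, l.length = n ∧ wprod p q l = g}

def natListB : ℕ → Bool → List Bool
  | 0, _ => []
  | n+1, x => x :: natListB n (!x)

lemma wprod_nil : wprod p q [] = 1 := rfl

lemma wprod_cons (x : Bool) (l : List Bool) :
    wprod p q (x :: l) = wletter p q x * wprod p q l := by
  simp [wprod]

lemma wprod_append (l₁ l₂ : List Bool) :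
    wprod p q (l₁ ++ l₂) = wprod p q l₁ * wprod p q l₂ := by
  simp [wprod]

variable {p q}

lemma wletter_sq (hp : p * p = 1) (hq : q * q = 1) (x : Bool) :
    wletter p q x * wletter p q x = 1 := by
  cases x
  · exact hp
  · exact hq

lemma reduce_non_chain (hp : p * p = 1) (hq : q * q = 1) :
    ∀ l : List Bool, ¬ l.Chain' (· ≠ ·) →
      ∃ l' : List Bool, wprod p q l' = wprod p q l ∧ l'.length + 2 = l.length := by
  intro l
  induction l with
  | nil => intro h; exact absurd List.isChain_nil h
  | cons x l ih =>
    intro h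
    match l, ih with
    | [], _ => exact absurd (List.isChain_singleton x) h
    | y :: t, ih =>
      by_cases hxy : x = y
      · refine ⟨t, ?_, by simp⟩
        rw [wprod_cons, wprod_cons, ← mul_assoc, hxy, wletter_sq hp hq, one_mul]
      · have hch : ¬ (y :: t).Chain' (· ≠ ·) := by
          intro hc
          exact h (List.isChain_cons_cons.2 ⟨hxy, hc⟩)
        obtain ⟨l₂, hl₂, hlen⟩ := ih hch
        refine ⟨x :: l₂, ?_, by simpa using hlen⟩
        rw [wprod_cons, wprod_cons, hl₂]

lemma natListB_length : ∀ (n : ℕ) (x : Bool), (natListB n x).length = n := by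
  intro n
  induction n with
  | zero => intro x; rfl
  | succ n ih => intro x; simp [natListB, ih]

lemma natListB_chain' : ∀ (n : ℕ) (x : Bool), (natListB n x).Chain' (· ≠ ·) := by
  intro n
  induction n with
  | zero => intro x; exact List.isChain_nil
  | succ n ih =>
    intro x
    cases n with
    | zero => exact List.isChain_singleton x
    | succ k =>
      rw [show natListB (k+1+1) x = x :: natListB (k+1) (!x) from rfl]
      rw [show natListB (k+1) (!x) = (!x) :: natListB k (!(!x)) from rfl]
      refine List.isChain_cons_cons.2 ⟨by simp, ?_⟩
      rw [show ((!x) :: natListB k (!(!x))) = natListB (k+1) (!x) from rfl]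
      exact ih (!x)

lemma eq_natListB_of_chain' :
    ∀ (l : List Bool), l.Chain' (· ≠ ·) → l = natListB l.length l.headI := by
  intro l
  induction l with
  | nil => intro _; rfl
  | cons x l ih =>
    intro h
    match l, ih, h with
    | [], _, _ => rfl
    | y :: t, ih, h =>
      have hxy : x ≠ y := (List.isChain_cons_cons.1 h).1
      have hch : (y :: t).Chain' (· ≠ ·) := (List.isChain_cons_cons.1 h).2
      have hy : y = !x := by
        cases x <;> cases y <;> simp_all
      have this' : y :: t = natListB (y :: t).length y := ih hch
      rw [show (x :: y :: t).length = (y :: t).length + 1 from rfl]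
      rw [show natListB ((y :: t).length + 1) (x :: y :: t).headI
            = x :: natListB (y :: t).length (!x) from rfl]
      rw [← hy, ← this']

lemma natListB_snoc : ∀ (n : ℕ) (x : Bool),
    natListB (n+1) x = natListB n x ++ [if n % 2 = 0 then x else !x] := by
  intro n
  induction n with
  | zero => intro x; rfl
  | succ n ih =>
    intro x
    rw [show natListB (n+1+1) x = x :: natListB (n+1) (!x) from rfl, ih (!x)]
    rw [show natListB (n+1) x = x :: natListB n (!x) from rfl]
    rcases Nat.mod_two_eq_zero_or_one n with h | h
    · have h1 : (n+1) % 2 = 1 := by omega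
      simp [h, h1]
    · have h1 : (n+1) % 2 = 0 := by omega
      simp [h, h1]

lemma natListB_append : ∀ (u v : ℕ) (x : Bool),
    natListB (u + v) x = natListB u x ++ natListB v (if u % 2 = 0 then x else !x) := by
  intro u
  induction u with
  | zero => intro v x; simp [natListB]
  | succ u ih =>
    intro v x
    rw [show u + 1 + v = (u + v) + 1 from by omega]
    rw [show natListB ((u+v)+1) x = x :: natListB (u+v) (!x) from rfl]
    rw [ih v (!x)]
    rw [show natListB (u+1) x = x :: natListB u (!x) from rfl]
    rcases Nat.mod_two_eq_zero_or_one u with h | h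
    · have h1 : (u+1) % 2 = 1 := by omega
      simp [h, h1]
    · have h1 : (u+1) % 2 = 0 := by omega
      simp [h, h1]

lemma pow_sandwich : ∀ n : ℕ, (p * q)^(n+1) = p * (q*p)^n * q := by
  intro n
  induction n with
  | zero => simp
  | succ n ih =>
    rw [pow_succ' (p * q) (n + 1), ih, pow_succ' (q * p) n]
    simp [mul_assoc]

lemma alt_prods (hp : p * p = 1) (hq : q * q = 1) : ∀ n : ℕ,
    wprod p q (natListB n false) * (wprod p q (natListB n true))⁻¹ = (p * q)^n ∧
    wprod p q (natListB n true) * (wprod p q (natListB n false))⁻¹ = (q * p)^n := by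
  have hpinv : p⁻¹ = p := inv_eq_of_mul_eq_one_right hp
  have hqinv : q⁻¹ = q := inv_eq_of_mul_eq_one_right hq
  intro n
  induction n with
  | zero => simp [natListB, wprod_nil]
  | succ n ih =>
    constructor
    · rw [show natListB (n+1) false = false :: natListB n true from rfl]
      rw [show natListB (n+1) true = true :: natListB n false from rfl]
      rw [wprod_cons, wprod_cons, mul_inv_rev]
      have hre : wletter p q false * wprod p q (natListB n true) *
          ((wprod p q (natListB n false))⁻¹ * (wletter p q true)⁻¹)
          = wletter p q false * (wprod p q (natListB n true) *
            (wprod p q (natListB n false))⁻¹) * (wletter p q true)⁻¹ := by group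
      rw [hre, ih.2]
      show p * (q*p)^n * q⁻¹ = (p*q)^(n+1)
      rw [hqinv, pow_sandwich n]
    · rw [show natListB (n+1) true = true :: natListB n false from rfl]
      rw [show natListB (n+1) false = false :: natListB n true from rfl]
      rw [wprod_cons, wprod_cons, mul_inv_rev]
      have hre : wletter p q true * wprod p q (natListB n false) *
          ((wprod p q (natListB n true))⁻¹ * (wletter p q false)⁻¹)
          = wletter p q true * (wprod p q (natListB n false) *
            (wprod p q (natListB n true))⁻¹) * (wletter p q false)⁻¹ := by group
      rw [hre, ih.1]
      show q * (p*q)^n * p⁻¹ = (q*p)^(n+1)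
      rw [hpinv, pow_sandwich (p := q) (q := p) n]

lemma alt_eq_of_rel (hp : p * p = 1) (hq : q * q = 1) (m : ℕ) (hrel : (p * q)^m = 1) :
    wprod p q (natListB m false) = wprod p q (natListB m true) := by
  have := (alt_prods hp hq m).1
  rw [hrel] at this
  exact mul_inv_eq_one.1 this

end Dihedral

-- ===================== Chebyshev sequences =====================

def cheb (t : ℝ) : ℕ → ℝ
  | 0 => 0
  | 1 => 1
  | n+2 => 2*t*cheb t (n+1) - cheb t n

lemma cheb_zero (t : ℝ) : cheb t 0 = 0 := rfl
lemma cheb_one (t : ℝ) : cheb t 1 = 1 := rfl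
lemma cheb_two (t : ℝ) (n : ℕ) : cheb t (n+2) = 2*t*cheb t (n+1) - cheb t n := rfl

lemma cheb_sin (φ : ℝ) : ∀ n : ℕ, cheb (Real.cos φ) n * Real.sin φ = Real.sin (n * φ) := by
  have key : ∀ n : ℕ, cheb (Real.cos φ) n * Real.sin φ = Real.sin (n * φ) ∧
      cheb (Real.cos φ) (n+1) * Real.sin φ = Real.sin ((n+1) * φ) := by
    intro n
    induction n with
    | zero => constructor <;> simp [cheb_zero, cheb_one]
    | succ n ih =>
      obtain ⟨k1, k2⟩ := ih
      push_cast at k1 k2 ⊢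
      refine ⟨k2, ?_⟩
      rw [cheb_two, sub_mul, mul_assoc, k2, k1]
      rw [show ((n:ℝ)+1+1)*φ = ((n:ℝ)+1)*φ + φ by ring,
        show (n:ℝ)*φ = ((n:ℝ)+1)*φ - φ by ring, Real.sin_add, Real.sin_sub]
      ring
  exact fun n => (key n).1

lemma cheb_ge (t : ℝ) (ht : 1 ≤ t) :
    ∀ n : ℕ, 0 ≤ cheb t n ∧ cheb t n ≤ cheb t (n+1) ∧ 1 ≤ cheb t (n+1) := by
  intro n
  induction n with
  | zero => refine ⟨le_refl _, ?_, ?_⟩ <;> simp [cheb_zero, cheb_one]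
  | succ n ih =>
    obtain ⟨h0, h1, h2⟩ := ih
    have h3 : cheb t (n+1) ≤ cheb t (n+2) := by
      rw [cheb_two]
      nlinarith
    exact ⟨by linarith, h3, by linarith⟩

-- ===================== rank two computations =====================

def psgn (j : ℕ) : Bool := decide (j % 2 = 1)

lemma psgn_succ (j : ℕ) : psgn (j+1) = !psgn j := by
  rcases Nat.mod_two_eq_zero_or_one j with h | h
  · have h1 : (j+1) % 2 = 1 := by omega
    simp [psgn, h, h1]
  · have h1 : (j+1) % 2 = 0 := by omega
    simp [psgn, h, h1]

lemma not_psgn_succ (j : ℕ) : (!psgn (j+1)) = psgn j := by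
  rw [psgn_succ, Bool.not_not]

section RankTwo

variable {a b : V}

lemma refl_comb_a (ha : a ∈ D.Pi) (hb : b ∈ D.Pi) (α β : ℝ) :
    D.refl a (α • a + β • b) = (2*(-D.B a b)*β - α) • a + β • b := by
  have haa : D.B a a = 1 := D.norm_one a ha
  have hba : D.B b a = D.B a b := D.symm b hb a ha
  rw [refl_apply, map_add, map_smul, map_smul]
  simp only [LinearMap.add_apply, LinearMap.smul_apply, smul_eq_mul]
  rw [haa, hba]
  module

lemma refl_comb_b (ha : a ∈ D.Pi) (hb : b ∈ D.Pi) (α β : ℝ) :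
    D.refl b (α • a + β • b) = α • a + (2*(-D.B a b)*α - β) • b := by
  have hbb : D.B b b = 1 := D.norm_one b hb
  have hab2 : D.B a b = D.B a b := rfl
  rw [refl_apply, map_add, map_smul, map_smul]
  simp only [LinearMap.add_apply, LinearMap.smul_apply, smul_eq_mul]
  rw [hbb]
  module

lemma natListB_psgn (j : ℕ) :
    natListB (j+1) (psgn (j+1)) = psgn (j+1) :: natListB j (psgn j) := by
  rw [show natListB (j+1) (psgn (j+1)) = psgn (j+1) :: natListB j (!psgn (j+1)) from rfl,
    not_psgn_succ]

lemma Vj_formula (ha : a ∈ D.Pi) (hb : b ∈ D.Pi) : ∀ j : ℕ,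
    ((wprod (D.sU a ha) (D.sU b hb) (natListB j (psgn j)) : (Module.End ℝ V)ˣ) :
      Module.End ℝ V) a
      = (if j % 2 = 0 then cheb (-D.B a b) (j+1) else cheb (-D.B a b) j) • a
        + (if j % 2 = 0 then cheb (-D.B a b) j else cheb (-D.B a b) (j+1)) • b := by
  intro j
  induction j with
  | zero =>
    simp [psgn, natListB, wprod_nil, cheb_zero, cheb_one]
  | succ j ih =>
    rw [natListB_psgn, wprod_cons, unit_mul_apply, ih]
    rcases Nat.mod_two_eq_zero_or_one j with h | h
    · have h1 : (j+1) % 2 = 1 := by omega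
      have hps : psgn (j+1) = true := by simp [psgn, h1]
      rw [hps]
      show D.refl b _ = _
      rw [if_pos h, if_pos h, if_neg (by omega : ¬ (j+1) % 2 = 0),
        if_neg (by omega : ¬ (j+1) % 2 = 0)]
      rw [refl_comb_b (D := D) ha hb]
      rw [cheb_two]
    · have h1 : (j+1) % 2 = 0 := by omega
      have hps : psgn (j+1) = false := by simp [psgn, h1]
      rw [hps]
      show D.refl a _ = _
      rw [if_neg (by omega : ¬ j % 2 = 0), if_neg (by omega : ¬ j % 2 = 0),
        if_pos h1, if_pos h1]
      rw [refl_comb_a (D := D) ha hb]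
      rw [cheb_two]

lemma rel_m (ha : a ∈ D.Pi) (hb : b ∈ D.Pi) {m : ℕ} (hm : 2 ≤ m)
    (hcos : D.B a b = -Real.cos (Real.pi / m)) :
    (D.sU a ha * D.sU b hb)^m = 1 := by
  have hmR : (0:ℝ) < (m:ℝ) := by exact_mod_cast (by omega : 0 < m)
  set θ : ℝ := Real.pi / m with hθ
  set t : ℝ := Real.cos θ with htdef
  have hab : D.B a b = -t := hcos
  have hba : D.B b a = -t := by rw [D.symm b hb a ha, hab]
  have haa : D.B a a = 1 := D.norm_one a ha
  have hbb : D.B b b = 1 := D.norm_one b hb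
  have hθpos : 0 < θ := div_pos Real.pi_pos hmR
  have hθle : θ ≤ Real.pi / 2 := by
    rw [hθ, div_le_div_iff₀ hmR (by norm_num : (0:ℝ) < 2)]
    have : (2:ℝ) ≤ (m:ℝ) := by exact_mod_cast hm
    nlinarith [Real.pi_pos]
  have ht0 : 0 ≤ t := Real.cos_nonneg_of_mem_Icc ⟨by linarith [Real.pi_pos], hθle⟩
  have ht1 : t < 1 := by
    have h1 : Real.cos θ < Real.cos 0 := by
      apply Real.strictAntiOn_cos ⟨le_refl 0, Real.pi_pos.le⟩
        ⟨hθpos.le, by linarith [Real.pi_pos]⟩ hθpos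
    rwa [Real.cos_zero] at h1
  have hden : 0 < 1 - t^2 := by nlinarith
  apply Units.ext
  rw [Units.val_pow_eq_pow_val, Units.val_one, Units.val_mul]
  rw [show ((D.sU a ha : (Module.End ℝ V)ˣ) : Module.End ℝ V) = D.refl a from rfl]
  rw [show ((D.sU b hb : (Module.End ℝ V)ˣ) : Module.End ℝ V) = D.refl b from rfl]
  set Em : Module.End ℝ V := D.refl a * D.refl b with hEm
  have hEmk : ∀ (k : V), D.B k a = 0 → D.B k b = 0 → ∀ j : ℕ, (Em^j) k = k := by
    intro k hka hkb j
    have hbk : D.refl b k = k := by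
      rw [refl_apply, hkb, mul_zero, zero_smul, sub_zero]
    have h1 : Em k = k := by
      rw [hEm, Module.End.mul_apply, hbk, refl_apply, hka, mul_zero, zero_smul, sub_zero]
    induction j with
    | zero => simp
    | succ j ih => rw [pow_succ, Module.End.mul_apply, h1, ih]
  have hba' : D.refl b a = (1:ℝ) • a + (2*t) • b := by
    rw [refl_apply, hab]
    module
  have hEa : Em a = (4*t^2-1) • a + (2*t) • b := by
    rw [hEm, Module.End.mul_apply, hba', refl_comb_a (D := D) ha hb, hab]
    module
  have hbb' : D.refl b b = (0:ℝ) • a + (-1:ℝ) • b := by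
    rw [refl_apply, hbb]
    module
  have hEb : Em b = (-(2*t)) • a + (-1 : ℝ) • b := by
    rw [hEm, Module.End.mul_apply, hbb', refl_comb_a (D := D) ha hb, hab]
    module
  have hCHa : Em (Em a) = (2*(2*t^2-1)) • Em a - a := by
    nth_rewrite 1 [hEa]
    rw [map_add, map_smul, map_smul, hEa, hEb]
    module
  have hCHb : Em (Em b) = (2*(2*t^2-1)) • Em b - b := by
    nth_rewrite 1 [hEb]
    rw [map_add, map_smul, map_smul, hEa, hEb]
    module
  have upow : ∀ j : ℕ, (Em^(j+1)) a
      = cheb (2*t^2-1) (j+1) • Em a - cheb (2*t^2-1) j • a := by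
    intro j
    induction j with
    | zero => rw [pow_one, cheb_one, cheb_zero]; module
    | succ j ih =>
      rw [pow_succ' Em (j+1), Module.End.mul_apply, ih, map_sub, map_smul, map_smul,
        hCHa, cheb_two]
      module
  have vpow : ∀ j : ℕ, (Em^(j+1)) b
      = cheb (2*t^2-1) (j+1) • Em b - cheb (2*t^2-1) j • b := by
    intro j
    induction j with
    | zero => rw [pow_one, cheb_one, cheb_zero]; module
    | succ j ih =>
      rw [pow_succ' Em (j+1), Module.End.mul_apply, ih, map_sub, map_smul, map_smul,
        hCHb, cheb_two]
      module
  have hfix : (Em^m) a = a ∧ (Em^m) b = b := by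
    rcases eq_or_lt_of_le hm with hm2 | hm3
    · -- m = 2
      have ht : t = 0 := by
        rw [htdef, hθ, ← hm2]
        norm_num
      constructor
      · rw [show m = 1 + 1 by omega, upow 1, cheb_two, cheb_one, cheb_zero, hEa, ht]
        try module
      · rw [show m = 1 + 1 by omega, vpow 1, cheb_two, cheb_one, cheb_zero, hEb, ht]
        try module
    · -- m ≥ 3
      have hc2 : 2*t^2-1 = Real.cos (2*θ) := by rw [Real.cos_two_mul]; try ring
      have h2θlt : 2*θ < Real.pi := by
        have h3 : (3:ℝ) ≤ (m:ℝ) := by exact_mod_cast hm3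
        have heq : 2*θ = 2*Real.pi/(m:ℝ) := by rw [hθ]; ring
        rw [heq, div_lt_iff₀ hmR]
        nlinarith [Real.pi_pos]
      have hsin2θ : 0 < Real.sin (2*θ) := Real.sin_pos_of_pos_of_lt_pi (by linarith) h2θlt
      have hm2θ : (m:ℝ) * (2*θ) = 2*Real.pi := by
        rw [hθ]; field_simp
      have hum : cheb (2*t^2-1) m = 0 := by
        have := cheb_sin (2*θ) m
        rw [hm2θ, Real.sin_two_pi] at this
        rw [hc2]
        exact (mul_eq_zero.1 this).resolve_right (ne_of_gt hsin2θ)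
      have hum1 : cheb (2*t^2-1) (m-1) = -1 := by
        have := cheb_sin (2*θ) (m-1)
        have hcast : ((m-1 : ℕ) : ℝ) = (m:ℝ) - 1 := by
          rw [Nat.cast_sub (by omega : 1 ≤ m)]; norm_num
        rw [hcast, show ((m:ℝ) - 1) * (2*θ) = (m:ℝ)*(2*θ) - 2*θ by ring, hm2θ,
          Real.sin_sub, Real.sin_two_pi, Real.cos_two_pi] at this
        rw [hc2]
        have h0 : cheb (Real.cos (2*θ)) (m-1) * Real.sin (2*θ) = (-1) * Real.sin (2*θ) := by
          rw [this]; ring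
        exact mul_right_cancel₀ (ne_of_gt hsin2θ) h0
      constructor
      · rw [show m = (m-1) + 1 by omega, upow (m-1), show (m-1)+1 = m by omega, hum, hum1]
        module
      · rw [show m = (m-1) + 1 by omega, vpow (m-1), show (m-1)+1 = m by omega, hum, hum1]
        module
  apply LinearMap.ext
  intro x
  rw [Module.End.one_apply]
  set α : ℝ := (D.B x a + t * D.B x b)/(1-t^2) with hα
  set β : ℝ := (t * D.B x a + D.B x b)/(1-t^2) with hβ
  set k : V := x - α • a - β • b with hk
  have hka : D.B k a = 0 := by
    rw [hk]
    simp only [map_sub, map_smul, LinearMap.sub_apply, LinearMap.smul_apply, smul_eq_mul]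
    rw [haa, hba, hα, hβ]
    field_simp
    ring
  have hkb : D.B k b = 0 := by
    rw [hk]
    simp only [map_sub, map_smul, LinearMap.sub_apply, LinearMap.smul_apply, smul_eq_mul]
    rw [hbb, hab, hα, hβ]
    field_simp
    ring
  have hx : x = α • a + β • b + k := by rw [hk]; module
  nth_rewrite 1 [hx]
  rw [map_add, map_add, map_smul, map_smul, hfix.1, hfix.2, hEmk k hka hkb m, hk]
  module

lemma natListB_head (n : ℕ) (x : Bool) : (natListB (n+1) x).head? = some x := rfl

lemma rank2 (ha : a ∈ D.Pi) (hb : b ∈ D.Pi) (hab : a ≠ b)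
    {g : (Module.End ℝ V)ˣ} (hex : ∃ l : List Bool, wprod (D.sU a ha) (D.sU b hb) l = g)
    (hge : len2 (D.sU a ha) (D.sU b hb) g ≤ len2 (D.sU a ha) (D.sU b hb) (g * D.sU a ha)) :
    ∃ lam mu : ℝ, 0 ≤ lam ∧ 0 ≤ mu ∧ 0 < lam + mu ∧
      (g : Module.End ℝ V) a = lam • a + mu • b := by
  set P : (Module.End ℝ V)ˣ := D.sU a ha with hP
  set Q : (Module.End ℝ V)ˣ := D.sU b hb with hQ
  have hp : P * P = 1 := D.sU_mul_self ha
  have hq : Q * Q = 1 := D.sU_mul_self hb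
  obtain ⟨lw, hlw⟩ := hex
  set r : ℕ := len2 P Q g with hr
  have hne : {n | ∃ l : List Bool, l.length = n ∧ wprod P Q l = g}.Nonempty :=
    ⟨lw.length, lw, rfl, hlw⟩
  obtain ⟨l₀, hl₀len0, hl₀prod⟩ := Nat.sInf_mem hne
  have hl₀len : l₀.length = r := hl₀len0
  have hmin : ∀ l : List Bool, wprod P Q l = g → r ≤ l.length := by
    intro l hl
    exact Nat.sInf_le ⟨l, rfl, hl⟩
  have hminP : ∀ l : List Bool, wprod P Q l = g * P → len2 P Q (g * P) ≤ l.length := by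
    intro l hl
    exact Nat.sInf_le ⟨l, rfl, hl⟩
  have hchain : l₀.Chain' (· ≠ ·) := by
    by_contra hnc
    obtain ⟨l', hl'prod, hl'len⟩ := reduce_non_chain hp hq l₀ hnc
    have := hmin l' (by rw [hl'prod, hl₀prod])
    omega
  have hl₀ : l₀ = natListB r l₀.headI := by
    rw [← hl₀len]
    exact eq_natListB_of_chain' l₀ hchain
  rcases Nat.eq_zero_or_pos r with hr0 | hrpos
  · -- r = 0 : g = 1
    have hg1 : g = 1 := by
      rw [← hl₀prod, hl₀, hr0]
      rfl
    refine ⟨1, 0, zero_le_one, le_refl 0, by norm_num, ?_⟩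
    rw [hg1, Units.val_one, Module.End.one_apply]
    module
  -- r ≥ 1 : analyze the last letter
  set h : Bool := l₀.headI with hh
  have hsnoc : l₀ = natListB (r-1) h ++ [if (r-1) % 2 = 0 then h else !h] := by
    have e1 := natListB_snoc (r-1) h
    rw [show r-1+1 = r by omega] at e1
    rw [hl₀]; exact e1
  have hlast_true : (if (r-1) % 2 = 0 then h else !h) = true := by
    by_contra hf
    have hfalse : (if (r-1) % 2 = 0 then h else !h) = false := by
      cases hval : (if (r-1) % 2 = 0 then h else !h)
      · rfl
      · exact absurd hval hf
    have hgP : wprod P Q (natListB (r-1) h) = g * P := by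
      rw [← hl₀prod, hsnoc, hfalse, wprod_append]
      rw [show wprod P Q [false] = P from by simp [wprod, wletter]]
      rw [mul_assoc, hp, mul_one]
    have := hminP _ hgP
    rw [natListB_length] at this
    omega
  have hpsgn : h = psgn r := by
    rcases Nat.mod_two_eq_zero_or_one (r-1) with hpar | hpar
    · rw [if_pos hpar] at hlast_true
      have : r % 2 = 1 := by omega
      rw [hlast_true, psgn]
      simp [this]
    · rw [if_neg (by omega)] at hlast_true
      have hh0 : h = false := by
        cases hval : h
        · rfl
        · rw [hval] at hlast_true; simp at hlast_true
      have : r % 2 = 0 := by omega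
      rw [hh0, psgn]
      simp [this]
  have hl₀' : l₀ = natListB r (psgn r) := by rw [hl₀, hpsgn]
  have hgprod : wprod P Q (natListB r (psgn r)) = g := by rw [← hl₀', hl₀prod]
  have hVal : (g : Module.End ℝ V) a
      = (if r % 2 = 0 then cheb (-D.B a b) (r+1) else cheb (-D.B a b) r) • a
        + (if r % 2 = 0 then cheb (-D.B a b) r else cheb (-D.B a b) (r+1)) • b := by
    rw [← hgprod]
    exact Vj_formula (D := D) ha hb r
  set t : ℝ := -D.B a b with htdef
  rcases D.offdiag a ha b hb hab with ⟨m, hm, hcos⟩ | hle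
  · -- finite case
    have hrel : (P * Q)^m = 1 := D.rel_m ha hb hm hcos
    have halt : ∀ x : Bool, wprod P Q (natListB m x) = wprod P Q (natListB m (!x)) := by
      intro x
      cases x
      · exact alt_eq_of_rel hp hq m hrel
      · exact (alt_eq_of_rel hp hq m hrel).symm
    -- r ≤ m - 1
    have hrm : r ≤ m - 1 := by
      by_contra hrm'
      have hrge : m ≤ r := by omega
      rcases eq_or_lt_of_le hrge with hreq | hrgt
      · -- r = m
        have hgm : wprod P Q (natListB m (!psgn m)) = g := by
          rw [← halt, hreq, hgprod]
        have hlastm : (if (m-1) % 2 = 0 then (!psgn m) else !(!psgn m)) = false := by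
          have h1 := hlast_true
          rw [hpsgn, ← hreq] at h1
          rcases Nat.mod_two_eq_zero_or_one (m-1) with hpar | hpar
          · rw [if_pos hpar] at h1 ⊢
            rw [h1]
            rfl
          · rw [if_neg (by omega)] at h1 ⊢
            rw [Bool.not_not]
            cases hval : psgn m
            · rfl
            · rw [hval] at h1; simp at h1
        have hgP : wprod P Q (natListB (m-1) (!psgn m)) = g * P := by
          have hsnocm : natListB m (!psgn m)
              = natListB (m-1) (!psgn m) ++ [if (m-1) % 2 = 0 then (!psgn m) else !(!psgn m)] := by
            have e1 := natListB_snoc (m-1) (!psgn m)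
            rw [show m-1+1 = m by omega] at e1
            exact e1
          rw [← hgm, hsnocm, hlastm, wprod_append]
          rw [show wprod P Q [false] = P from by simp [wprod, wletter]]
          rw [mul_assoc, hp, mul_one]
        have := hminP _ hgP
        rw [natListB_length] at this
        omega
      · -- r > m
        set y : Bool := if (r-m) % 2 = 0 then psgn r else !psgn r with hy
        have hsplit : natListB r (psgn r) = natListB (r-m) (psgn r) ++ natListB m y := by
          have e2 := natListB_append (r-m) m (psgn r)
          rw [show (r-m)+m = r by omega] at e2
          rw [e2, hy]
        set L' : List Bool := natListB (r-m) (psgn r) ++ natListB m (!y) with hL'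
        have hL'prod : wprod P Q L' = g := by
          rw [hL', wprod_append, ← halt, ← wprod_append, ← hsplit, hgprod]
        have hL'len : L'.length = r := by
          rw [hL', List.length_append, natListB_length, natListB_length]
          omega
        have hnc : ¬ L'.Chain' (· ≠ ·) := by
          intro hch
          obtain ⟨_, _, hjun⟩ := List.isChain_append.1 hch
          have hz : (natListB (r-m) (psgn r)).getLast? = some (!y) := by
            rw [show r-m = (r-m-1)+1 by omega, natListB_snoc, List.getLast?_concat]
            congr 1
            rcases Nat.mod_two_eq_zero_or_one (r-m-1) with hpar | hpar
            · rw [if_pos hpar, hy, if_neg (by omega)]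
              rw [Bool.not_not]
            · rw [if_neg (by omega), hy, if_pos (by omega)]
          have hhd : (natListB m (!y)).head? = some (!y) := by
            rw [show m = (m-1)+1 by omega]
            exact natListB_head _ _
          exact hjun _ hz _ hhd rfl
        obtain ⟨l'', hl''prod, hl''len⟩ := reduce_non_chain hp hq L' hnc
        have := hmin l'' (by rw [hl''prod, hL'prod])
        omega
    -- nonnegativity via sines
    have hmR : (0:ℝ) < (m:ℝ) := by exact_mod_cast (by omega : 0 < m)
    set θ : ℝ := Real.pi / m with hθ
    have htcos : t = Real.cos θ := by rw [htdef, hcos]; ring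
    have hθpos : 0 < θ := div_pos Real.pi_pos hmR
    have hθlt : θ < Real.pi := by
      rw [hθ, div_lt_iff₀ hmR]
      have : (2:ℝ) ≤ (m:ℝ) := by exact_mod_cast hm
      nlinarith [Real.pi_pos]
    have hsθ : 0 < Real.sin θ := Real.sin_pos_of_pos_of_lt_pi hθpos hθlt
    have hnneg : ∀ j : ℕ, j ≤ m → 0 ≤ cheb t j := by
      intro j hj
      have hjm : (j:ℝ) ≤ (m:ℝ) := by exact_mod_cast hj
      have hjθ : (j:ℝ) * θ ≤ Real.pi := by
        rw [hθ, mul_div_assoc', div_le_iff₀ hmR]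
        nlinarith [Real.pi_pos]
      have hsin := cheb_sin θ j
      rw [← htcos] at hsin
      have hsj : 0 ≤ Real.sin ((j:ℝ) * θ) :=
        Real.sin_nonneg_of_nonneg_of_le_pi
          (mul_nonneg (by positivity) hθpos.le) hjθ
      by_contra hneg
      push_neg at hneg
      have hlt : cheb t j * Real.sin θ < 0 := mul_neg_of_neg_of_pos hneg hsθ
      rw [hsin] at hlt
      linarith
    have hposr : 0 < cheb t r := by
      have hrR : (1:ℝ) ≤ (r:ℝ) := by exact_mod_cast hrpos
      have hrm' : (r:ℝ) < (m:ℝ) := by exact_mod_cast (by omega : r < m)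
      have hrθpos : 0 < (r:ℝ) * θ := mul_pos (by linarith) hθpos
      have hrθlt : (r:ℝ) * θ < Real.pi := by
        rw [hθ, mul_div_assoc', div_lt_iff₀ hmR]
        nlinarith [Real.pi_pos]
      have hsinr : 0 < Real.sin ((r:ℝ) * θ) := Real.sin_pos_of_pos_of_lt_pi hrθpos hrθlt
      have hsin := cheb_sin θ r
      rw [← htcos] at hsin
      by_contra hneg
      push_neg at hneg
      have hle0 : cheb t r * Real.sin θ ≤ 0 := mul_nonpos_of_nonpos_of_nonneg hneg hsθ.le
      rw [hsin] at hle0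
      linarith
    refine ⟨if r % 2 = 0 then cheb t (r+1) else cheb t r,
      if r % 2 = 0 then cheb t r else cheb t (r+1), ?_, ?_, ?_, ?_⟩
    · split_ifs
      · exact hnneg (r+1) (by omega)
      · exact hnneg r (by omega)
    · split_ifs
      · exact hnneg r (by omega)
      · exact hnneg (r+1) (by omega)
    · have := hnneg (r+1) (by omega)
      split_ifs <;> linarith
    · exact hVal
  · -- hyperbolic case
    have ht1 : 1 ≤ t := by rw [htdef]; linarith
    obtain ⟨hc0, hc1, hc2⟩ := cheb_ge t ht1 r
    refine ⟨if r % 2 = 0 then cheb t (r+1) else cheb t r,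
      if r % 2 = 0 then cheb t r else cheb t (r+1), ?_, ?_, ?_, ?_⟩
    · split_ifs
      · linarith
      · exact hc0
    · split_ifs
      · exact hc0
      · linarith
    · split_ifs <;> linarith
    · exact hVal

end RankTwo

-- ===================== length and words in W =====================

lemma wprod_singleton (p q : (Module.End ℝ V)ˣ) (x : Bool) :
    wprod p q [x] = wletter p q x := by
  simp [wprod]

lemma wprod_mem_W {a b : V} (ha : a ∈ D.Pi) (hb : b ∈ D.Pi) (l : List Bool) :
    wprod (D.sU a ha) (D.sU b hb) l ∈ D.Wgrp := by
  apply list_prod_mem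
  intro x hx
  rw [List.mem_map] at hx
  obtain ⟨y, _, rfl⟩ := hx
  cases y
  · exact D.sU_mem_W ha
  · exact D.sU_mem_W hb

lemma len_wprod_le {a b : V} (ha : a ∈ D.Pi) (hb : b ∈ D.Pi) (l : List Bool) :
    D.len (wprod (D.sU a ha) (D.sU b hb) l) ≤ l.length := by
  have := D.len_le (l := l.map (wletter (D.sU a ha) (D.sU b hb)))
    (w := wprod (D.sU a ha) (D.sU b hb) l) ?_ rfl
  · simpa using this
  · intro u hu
    rw [List.mem_map] at hu
    obtain ⟨y, _, rfl⟩ := hu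
    cases y
    · exact D.sU_mem_simples ha
    · exact D.sU_mem_simples hb

lemma descent (a b : V) (ha : a ∈ D.Pi) (hb : b ∈ D.Pi) :
    ∀ k : ℕ, ∀ w ∈ D.Wgrp, D.len w ≤ k →
    ∃ u ∈ D.Wgrp, ∃ l : List Bool,
      w = u * wprod (D.sU a ha) (D.sU b hb) l ∧
      D.len w = D.len u + l.length ∧
      D.len u ≤ D.len (u * D.sU a ha) ∧ D.len u ≤ D.len (u * D.sU b hb) := by
  intro k
  induction k with
  | zero =>
    intro w hw hlen
    exact ⟨w, hw, [], (mul_one w).symm, by simp [wprod_nil], by omega, by omega⟩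
  | succ k ih =>
    intro w hw hlen
    by_cases hca : D.len (w * D.sU a ha) < D.len w
    · obtain ⟨u, hu, l, heq, hlen2, h1, h2⟩ :=
        ih (w * D.sU a ha) (mul_mem hw (D.sU_mem_W ha)) (by omega)
      refine ⟨u, hu, l ++ [false], ?_, ?_, h1, h2⟩
      · rw [wprod_append, wprod_singleton, ← mul_assoc, ← heq]
        rw [show wletter (D.sU a ha) (D.sU b hb) false = D.sU a ha from rfl]
        rw [mul_assoc, D.sU_mul_self ha, mul_one]
      · have hup : D.len w ≤ D.len (w * D.sU a ha) + 1 := by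
          have := D.len_mul_simple_le (w := w * D.sU a ha) (s := D.sU a ha)
            (mul_mem hw (D.sU_mem_W ha)) (D.sU_mem_simples ha)
          rw [mul_assoc, D.sU_mul_self ha, mul_one] at this
          exact this
        rw [List.length_append]
        simp only [List.length_cons, List.length_nil]
        omega
    · by_cases hcb : D.len (w * D.sU b hb) < D.len w
      · obtain ⟨u, hu, l, heq, hlen2, h1, h2⟩ :=
          ih (w * D.sU b hb) (mul_mem hw (D.sU_mem_W hb)) (by omega)
        refine ⟨u, hu, l ++ [true], ?_, ?_, h1, h2⟩
        · rw [wprod_append, wprod_singleton, ← mul_assoc, ← heq]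
          rw [show wletter (D.sU a ha) (D.sU b hb) true = D.sU b hb from rfl]
          rw [mul_assoc, D.sU_mul_self hb, mul_one]
        · have hup : D.len w ≤ D.len (w * D.sU b hb) + 1 := by
            have := D.len_mul_simple_le (w := w * D.sU b hb) (s := D.sU b hb)
              (mul_mem hw (D.sU_mem_W hb)) (D.sU_mem_simples hb)
            rw [mul_assoc, D.sU_mul_self hb, mul_one] at this
            exact this
          rw [List.length_append]
          simp only [List.length_cons, List.length_nil]
          omega
      · exact ⟨w, hw, [], (mul_one w).symm, by simp [wprod_nil], by omega, by omega⟩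

-- ===================== the main positivity theorem =====================

lemma Tprime : ∀ k : ℕ, ∀ w ∈ D.Wgrp, D.len w ≤ k →
    ∀ (a : V) (ha : a ∈ D.Pi), D.len w ≤ D.len (w * D.sU a ha) →
    (w : Module.End ℝ V) a ∈ PLC D.Pi := by
  intro k
  induction k with
  | zero =>
    intro w hw hlen a ha _
    have hw1 : w = 1 := D.eq_one_of_len_eq_zero hw (by omega)
    rw [hw1, Units.val_one, Module.End.one_apply]
    exact plc_base ha
  | succ k ih =>
    intro w hw hlen a ha hge
    by_cases hlk : D.len w ≤ k
    · exact ih w hw hlk a ha hge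
    have hlw : D.len w = k + 1 := by omega
    -- find b with len (w * s_b) < len w
    obtain ⟨lmin, hlmin_len, hlmin_s, hlmin_prod⟩ := D.exists_min_word hw
    have hlne : lmin ≠ [] := by
      intro h0
      rw [h0] at hlmin_len
      simp at hlmin_len
      omega
    obtain ⟨b, hbPi', hbval⟩ := D.simple_eq_sU (hlmin_s _ (List.getLast_mem hlne))
    have hwb : D.len (w * D.sU b hbPi') ≤ k := by
      have hsplit : lmin.dropLast ++ [lmin.getLast hlne] = lmin :=
        List.dropLast_append_getLast hlne
      have hprod2 : lmin.dropLast.prod * (lmin.getLast hlne) = w := by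
        have hcg := congrArg List.prod hsplit
        rw [List.prod_append, List.prod_cons, List.prod_nil, mul_one, hlmin_prod] at hcg
        exact hcg
      have hwsb : w * D.sU b hbPi' = lmin.dropLast.prod := by
        rw [← hprod2, hbval, mul_assoc, D.sU_mul_self hbPi', mul_one]
      have hlb := D.len_le (l := lmin.dropLast) (w := w * D.sU b hbPi')
        (fun u hu => hlmin_s u (List.mem_of_mem_dropLast hu)) hwsb.symm
      rw [List.length_dropLast, hlmin_len, hlw] at hlb
      omega
    have hab : a ≠ b := by
      intro h
      subst h
      have : D.sU a hbPi' = D.sU a ha := Units.ext rfl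
      rw [this] at hwb
      omega
    -- descent into the dihedral coset
    obtain ⟨u, hu, lb, hueq, hulen, hua, hub⟩ :=
      D.descent a b ha hbPi' (k+1) w hw (by omega)
    set P : (Module.End ℝ V)ˣ := D.sU a ha with hP
    set Q : (Module.End ℝ V)ˣ := D.sU b hbPi' with hQ
    set g : (Module.End ℝ V)ˣ := wprod P Q lb with hg
    have hlbne : lb ≠ [] := by
      intro h0
      have hg1 : g = 1 := by rw [hg, h0, wprod_nil]
      rw [hg1, mul_one] at hueq
      rw [← hueq] at hub
      omega
    have hlenu : D.len u ≤ k := by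
      have : lb.length ≥ 1 := by
        cases lb
        · exact absurd rfl hlbne
        · simp
      omega
    have hplc_a : (u : Module.End ℝ V) a ∈ PLC D.Pi := ih u hu hlenu a ha hua
    have hplc_b : (u : Module.End ℝ V) b ∈ PLC D.Pi := ih u hu hlenu b hbPi' hub
    -- transfer the length condition to the dihedral group
    have hge2 : len2 P Q g ≤ len2 P Q (g * P) := by
      by_contra hlt
      push_neg at hlt
      have hgle : len2 P Q g ≤ lb.length := Nat.sInf_le ⟨lb, rfl, rfl⟩
      have hne2 : {n | ∃ l : List Bool, l.length = n ∧ wprod P Q l = g * P}.Nonempty :=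
        ⟨(lb ++ [false]).length, lb ++ [false], rfl, by
          rw [wprod_append, wprod_singleton]; rfl⟩
      obtain ⟨l₂, hl₂len, hl₂prod⟩ := Nat.sInf_mem hne2
      have hl₂len' : l₂.length = len2 P Q (g * P) := hl₂len
      have hwP : w * P = u * wprod P Q l₂ := by
        rw [hl₂prod, hueq, mul_assoc]
      have hlenwP : D.len (w * P) ≤ D.len u + l₂.length := by
        rw [hwP]
        calc D.len (u * wprod P Q l₂) ≤ D.len u + D.len (wprod P Q l₂) :=
              D.len_mul_le hu (D.wprod_mem_W ha hbPi' l₂)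
          _ ≤ D.len u + l₂.length := by
              have hwl := D.len_wprod_le ha hbPi' l₂
              rw [← hP, ← hQ] at hwl
              omega
      rw [hl₂len'] at hlenwP
      have : D.len (w * P) < D.len w := by omega
      omega
    obtain ⟨lam, mu, hlam, hmu, hsum, hval⟩ :=
      D.rank2 ha hbPi' hab ⟨lb, rfl⟩ hge2
    have hwa : (w : Module.End ℝ V) a = lam • ((u : Module.End ℝ V) a)
        + mu • ((u : Module.End ℝ V) b) := by
      rw [hueq, unit_mul_apply, hval, map_add, map_smul, map_smul]
    rw [hwa]
    exact plc_comb hplc_a hplc_b hlam hmu hsum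

lemma root_pos_or_neg {x : V} (hx : x ∈ D.roots) : x ∈ D.posRoots ∨ x ∈ D.negRoots := by
  obtain ⟨w, hw, c, hc, rfl⟩ := hx
  rcases le_or_gt (D.len w) (D.len (w * D.sU c hc)) with hle | hlt
  · left
    exact ⟨⟨w, hw, c, hc, rfl⟩, D.Tprime (D.len w) w hw le_rfl c hc hle⟩
  · right
    set w' : (Module.End ℝ V)ˣ := w * D.sU c hc with hw'
    have hw'mem : w' ∈ D.Wgrp := mul_mem hw (D.sU_mem_W hc)
    have hww : w' * D.sU c hc = w := by
      rw [hw', mul_assoc, D.sU_mul_self hc, mul_one]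
    have hlen : D.len w' ≤ D.len (w' * D.sU c hc) := by
      rw [hww]; omega
    have hplc : (w' : Module.End ℝ V) c ∈ PLC D.Pi :=
      D.Tprime (D.len w') w' hw'mem le_rfl c hc hlen
    have hneg : (w' : Module.End ℝ V) c = -((w : Module.End ℝ V) c) := by
      rw [hw', unit_mul_apply, show ((D.sU c hc : (Module.End ℝ V)ˣ) : Module.End ℝ V)
        = D.refl c from rfl, D.refl_apply_self hc, map_neg]
    show -((w : Module.End ℝ V) c) ∈ D.posRoots
    rw [← hneg]
    exact ⟨⟨w', hw'mem, c, hc, rfl⟩, hplc⟩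

lemma refl_pos_of_pos {a p : V} (ha : a ∈ D.Pi) (hp : p ∈ D.posRoots) (hpa : p ≠ a) :
    D.refl a p ∈ D.posRoots := by
  have hroot : D.refl a p ∈ D.roots := by
    have := D.roots_W_apply (D.sU_mem_W ha) hp.1
    exact this
  rcases D.root_pos_or_neg hroot with h | h
  · exact h
  · exact absurd (D.eq_of_pos_refl_neg ha hp h) hpa

-- ===================== counting N(w) =====================

lemma nset_one : D.NSet 1 = ∅ := by
  rw [Set.eq_empty_iff_forall_notMem]
  intro z hz
  obtain ⟨hz1, hz2⟩ := hz
  rw [Units.val_one, Module.End.one_apply] at hz2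
  exact D.pos_neg_disjoint hz1 hz2

lemma nset_word : ∀ l : List (Module.End ℝ V)ˣ, (∀ u ∈ l, u ∈ D.simples) →
    (D.NSet l.prod).Finite ∧ (D.NSet l.prod).ncard ≤ l.length := by
  intro l
  induction l with
  | nil =>
    intro _
    rw [List.prod_nil, D.nset_one]
    simp
  | cons s tl ih =>
    intro hall
    have htl : ∀ u ∈ tl, u ∈ D.simples := fun u hu => hall u (List.mem_cons_of_mem s hu)
    obtain ⟨hfin, hcard⟩ := ih htl
    obtain ⟨a, ha, rfl⟩ := D.simple_eq_sU (hall s List.mem_cons_self)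
    set g : (Module.End ℝ V)ˣ := tl.prod with hgdef
    have hgmem : g ∈ D.Wgrp := list_prod_mem (fun u hu => D.simple_mem_W (htl u hu))
    have hsub : D.NSet (D.sU a ha * g) ⊆
        insert (((g⁻¹ : (Module.End ℝ V)ˣ) : Module.End ℝ V) a) (D.NSet g) := by
      intro y hy
      obtain ⟨hypos, hyneg⟩ := hy
      rw [unit_mul_apply] at hyneg
      have hgy : (g : Module.End ℝ V) y ∈ D.roots := D.roots_W_apply hgmem hypos.1
      rcases D.root_pos_or_neg hgy with hpos | hneg
      · by_cases hga : (g : Module.End ℝ V) y = a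
        · left
          rw [← hga, unit_inv_apply]
        · exfalso
          have := D.refl_pos_of_pos ha hpos hga
          exact D.pos_neg_disjoint this hyneg
      · right
        exact ⟨hypos, hneg⟩
    rw [List.prod_cons]
    constructor
    · exact Set.Finite.subset (hfin.insert _) hsub
    · calc (D.NSet (D.sU a ha * g)).ncard
          ≤ (insert (((g⁻¹ : (Module.End ℝ V)ˣ) : Module.End ℝ V) a) (D.NSet g)).ncard :=
            Set.ncard_le_ncard hsub (hfin.insert _)
        _ ≤ (D.NSet g).ncard + 1 := Set.ncard_insert_le _ _
        _ ≤ tl.length + 1 := by omega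
        _ = (D.sU a ha :: tl).length := by simp

end CoxeterDatum

/-- Lemma 3.10: `{wa : a ∈ D_0, ℓ(w) < n} ∩ D_n = ∅`. -/
theorem short_orbit_of_elementary_misses_Dn (D : CoxeterDatum V) (n : ℕ) :
    {v | ∃ a ∈ D.Dn 0, ∃ w ∈ D.Wgrp, D.len w < n ∧ v = (w : Module.End ℝ V) a}
      ∩ D.Dn n = ∅ := by
  rw [Set.eq_empty_iff_forall_notMem]
  rintro v ⟨⟨a, haDn, w, hw, hlen, rfl⟩, hvDn⟩
  obtain ⟨hapos, hafin, hacard⟩ := haDn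
  have haD : D.DSet a = ∅ := (Set.ncard_eq_zero hafin).1 hacard
  obtain ⟨hvpos, hvfin, hvcard⟩ := hvDn
  have hwinv : w⁻¹ ∈ D.Wgrp := inv_mem hw
  have hsub : D.DSet ((w : Module.End ℝ V) a) ⊆ D.NSet w⁻¹ := by
    intro y hy
    obtain ⟨hypos, hyne, hydom⟩ := hy
    have hyroot : ((w⁻¹ : (Module.End ℝ V)ˣ) : Module.End ℝ V) y ∈ D.roots :=
      D.roots_W_apply hwinv hypos.1
    rcases D.root_pos_or_neg hyroot with hpos | hneg
    · exfalso
      have hmem : ((w⁻¹ : (Module.End ℝ V)ˣ) : Module.End ℝ V) y ∈ D.DSet a := by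
        refine ⟨hpos, ?_, ?_⟩
        · intro h
          apply hyne
          have hy2 := congrArg (w : Module.End ℝ V) h
          rw [CoxeterDatum.unit_apply_inv] at hy2
          exact hy2
        · intro u hu hua
          have ha' : ((u * w⁻¹ : (Module.End ℝ V)ˣ) : Module.End ℝ V)
              ((w : Module.End ℝ V) a) ∈ D.negRoots := by
            rw [CoxeterDatum.unit_mul_apply, CoxeterDatum.unit_inv_apply]
            exact hua
          have hres := hydom (u * w⁻¹) (mul_mem hu hwinv) ha'
          rw [CoxeterDatum.unit_mul_apply] at hres
          exact hres
      rw [haD] at hmem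
      exact hmem
    · exact ⟨hypos, hneg⟩
  obtain ⟨l, hllen, hls, hlprod⟩ := D.exists_min_word hwinv
  obtain ⟨hfinN, hcardN⟩ := D.nset_word l hls
  rw [hlprod] at hfinN hcardN
  have h1 : n ≤ (D.NSet w⁻¹).ncard := hvcard ▸ Set.ncard_le_ncard hsub hfinN
  have h2 : D.len w⁻¹ ≤ D.len w := D.len_inv_le hw
  omega
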